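/- If x⃗ ∈ L satisfies 0 ≤ x⃗ ≤ δ⃗, then x⃗ − w⃗ ≱ 0 and w⃗ − x⃗ ≱ 0. -/

import Mathlib

open scoped BigOperators

namespace WPL

/-- The rank-one abelian group `L(p₁,…,p_t)`: the quotient of `ℤ^t` by the
subgroup generated by the elements `p 0 • e 0 - p i • e i`. -/
def rel (t : ℕ) [NeZero t] (p : Fin t → ℕ) : Submodule ℤ (Fin t → ℤ) :=
  Submodule.span ℤ
    { v | ∃ i : Fin t, v = (p 0 : ℤ) • Pi.single (0 : Fin t) (1 : ℤ) - (p i : ℤ) • Pi.single i (1 : ℤ) }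

/-- The group `L(p₁,…,p_t)`. -/
abbrev L (t : ℕ) [NeZero t] (p : Fin t → ℕ) : Type :=
  (Fin t → ℤ) ⧸ rel t p

/-- The generator `x⃗ᵢ` of `L`. -/
def xg (t : ℕ) [NeZero t] (p : Fin t → ℕ) (i : Fin t) : L t p :=
  Submodule.Quotient.mk (Pi.single i (1 : ℤ))

/-- The canonical element `c⃗ = p₁ • x⃗₁`. -/
noncomputable def cg (t : ℕ) [NeZero t] (p : Fin t → ℕ) : L t p :=
  (p 0 : ℤ) • xg t p 0

/-- `y ∈ L_+`, i.e. `y ≥ 0`: `y` is an ℕ-linear combination of the `x⃗ᵢ`. -/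
def pos (t : ℕ) [NeZero t] (p : Fin t → ℕ) (y : L t p) : Prop :=
  ∃ a : Fin t → ℕ, y = ∑ i, (a i : ℤ) • xg t p i

/-- The dualizing element `w⃗ = (t-2) • c⃗ - ∑ x⃗ᵢ`. -/
noncomputable def wg (t : ℕ) [NeZero t] (p : Fin t → ℕ) : L t p :=
  ((t : ℤ) - 2) • cg t p - ∑ i, xg t p i

/-- The dominant element `δ⃗ = c⃗ + 2 • w⃗`. -/
noncomputable def dg (t : ℕ) [NeZero t] (p : Fin t → ℕ) : L t p :=
  cg t p + 2 • wg t p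

end WPL

namespace WPLAux
open WPL

variable (t : ℕ) [NeZero t] (p : Fin t → ℕ)

/-- Degree map on `ℤ^t`: `v ↦ ∑ vᵢ/pᵢ`. -/
noncomputable def psi0 : (Fin t → ℤ) →ₗ[ℤ] ℚ where
  toFun v := ∑ i, (v i : ℚ) / (p i : ℚ)
  map_add' u v := by
    simp [add_div, Finset.sum_add_distrib]
  map_smul' c v := by
    simp only [Pi.smul_apply, zsmul_eq_mul, Int.cast_mul, RingHom.id_apply,
      Finset.mul_sum, mul_div_assoc]
    push_cast
    simp [div_eq_mul_inv, mul_assoc]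

/-- Coordinate map mod `p j`. -/
def chi0 (j : Fin t) : (Fin t → ℤ) →ₗ[ℤ] ZMod (p j) where
  toFun v := ((v j : ℤ) : ZMod (p j))
  map_add' u v := by simp [Pi.add_apply]
  map_smul' c v := by simp [Pi.smul_apply, zsmul_eq_mul]

lemma psi0_single (i : Fin t) :
    psi0 t p (Pi.single i (1 : ℤ)) = ((p i : ℚ))⁻¹ := by
  simp only [psi0, LinearMap.coe_mk, AddHom.coe_mk, Pi.single_apply]
  rw [Finset.sum_eq_single i] <;> simp +contextual [one_div]

lemma rel_le_ker_psi0 (hp : ∀ i, 2 ≤ p i) : rel t p ≤ LinearMap.ker (psi0 t p) := by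
  rw [rel, Submodule.span_le]
  rintro v ⟨i, rfl⟩
  have h0 : (p 0 : ℚ) ≠ 0 := by
    have := hp 0; exact_mod_cast by omega
  have hi : (p i : ℚ) ≠ 0 := by
    have := hp i; exact_mod_cast by omega
  simp only [SetLike.mem_coe, LinearMap.mem_ker]
  rw [map_sub, map_smul, map_smul, psi0_single, psi0_single]
  simp only [zsmul_eq_mul, Int.cast_natCast]
  field_simp
  simp

lemma chi0_single (j a : Fin t) :
    chi0 t p j (Pi.single a (1:ℤ)) = if j = a then 1 else 0 := by
  simp only [chi0, LinearMap.coe_mk, AddHom.coe_mk, Pi.single_apply]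
  split <;> simp

lemma rel_le_ker_chi0 (j : Fin t) : rel t p ≤ LinearMap.ker (chi0 t p j) := by
  rw [rel, Submodule.span_le]
  rintro v ⟨i, rfl⟩
  simp only [SetLike.mem_coe, LinearMap.mem_ker]
  rw [map_sub, map_smul, map_smul, chi0_single, chi0_single]
  rcases eq_or_ne j 0 with rfl | hj0
  · rcases eq_or_ne (0 : Fin t) i with rfl | hji
    · simp
    · simp [if_neg hji, zsmul_eq_mul, ZMod.natCast_self]
  · rcases eq_or_ne j i with rfl | hji
    · simp [if_neg hj0, zsmul_eq_mul, ZMod.natCast_self]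
    · simp [if_neg hj0, if_neg hji]

noncomputable def psi (hp : ∀ i, 2 ≤ p i) : L t p →ₗ[ℤ] ℚ :=
  Submodule.liftQ (rel t p) (psi0 t p) (rel_le_ker_psi0 t p hp)

noncomputable def chi (j : Fin t) : L t p →ₗ[ℤ] ZMod (p j) :=
  Submodule.liftQ (rel t p) (chi0 t p j) (rel_le_ker_chi0 t p j)

lemma psi_xg (hp : ∀ i, 2 ≤ p i) (i : Fin t) :
    psi t p hp (xg t p i) = ((p i : ℚ))⁻¹ := by
  rw [psi, xg, Submodule.liftQ_apply, psi0_single]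

lemma chi_xg (j i : Fin t) :
    chi t p j (xg t p i) = if j = i then 1 else 0 := by
  rw [chi, xg, Submodule.liftQ_apply, chi0_single]

/-- Key lemma: a relation `∑ nᵢ • x⃗ᵢ = m • c⃗` with all `nᵢ ≥ 1` forces `m ≥ t`. -/
lemma key (ht : 3 ≤ t) (hp : ∀ i, 2 ≤ p i) (n : Fin t → ℤ) (hn : ∀ i, 1 ≤ n i)
    (m : ℤ) (hm : m ≤ (t : ℤ) - 1)
    (h : ∑ i, n i • xg t p i = m • ((p 0 : ℤ) • xg t p 0)) : False := by
  have hps : ∀ j, (p j : ℚ) ≠ 0 := by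
    intro j; have := hp j; exact_mod_cast by omega
  have hdvd : ∀ j, (p j : ℤ) ∣ n j := by
    intro j
    haveI : NeZero (p j) := ⟨by have := hp j; omega⟩
    have hc := congrArg (chi t p j) h
    rw [map_sum] at hc
    simp only [map_smul, chi_xg] at hc
    rw [Finset.sum_eq_single j] at hc
    · rw [if_pos rfl] at hc
      rcases eq_or_ne j 0 with rfl | hj0
      · rw [if_pos rfl] at hc
        simp only [smul_eq_mul, zsmul_eq_mul, mul_one, Int.cast_natCast,
          ZMod.natCast_self, mul_zero] at hc
        rwa [← ZMod.intCast_zmod_eq_zero_iff_dvd]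
      · rw [if_neg hj0] at hc
        simp only [smul_eq_mul, zsmul_eq_mul, mul_one, smul_zero, mul_zero] at hc
        rwa [← ZMod.intCast_zmod_eq_zero_iff_dvd]
    · intro i _ hij
      rw [if_neg (Ne.symm hij), smul_zero]
    · simp
  choose mf hmf using hdvd
  have hmf1 : ∀ j, 1 ≤ mf j := by
    intro j
    by_contra hlt
    push_neg at hlt
    have h1 := hn j
    have h2 : (2 : ℤ) ≤ (p j : ℤ) := by exact_mod_cast hp j
    have h3 := hmf j
    nlinarith
  have hq := congrArg (psi t p hp) h
  rw [map_sum] at hq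
  simp only [map_smul, psi_xg, zsmul_eq_mul, Int.cast_natCast] at hq
  rw [mul_inv_cancel₀ (hps 0), mul_one] at hq
  have hL : ∀ j ∈ Finset.univ, (n j : ℚ) * ((p j : ℚ))⁻¹ = (mf j : ℚ) := by
    intro j _
    rw [hmf j]
    push_cast
    rw [mul_comm ((p j : ℚ)) _, mul_assoc, mul_inv_cancel₀ (hps j), mul_one]
  rw [Finset.sum_congr rfl hL] at hq
  have hsum : (t : ℚ) ≤ ∑ j, (mf j : ℚ) := by
    calc (t : ℚ) = ∑ _j : Fin t, (1:ℚ) := by simp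
    _ ≤ ∑ j, (mf j : ℚ) := by
        apply Finset.sum_le_sum
        intro j _
        exact_mod_cast hmf1 j
  rw [hq] at hsum
  have hm' : (m : ℚ) ≤ (t : ℚ) - 1 := by exact_mod_cast hm
  linarith

end WPLAux

open WPL in
/-- if `0 ≤ x⃗ ≤ δ⃗` then `x⃗ - w⃗ ≱ 0` and `w⃗ - x⃗ ≱ 0`. -/
theorem not_pos_sub_w_of_le_delta
    (t : ℕ) [NeZero t] (ht : 3 ≤ t) (p : Fin t → ℕ) (hp : ∀ i, 2 ≤ p i)
    (x : L t p) (hx : pos t p x) (hxd : pos t p (dg t p - x)) :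
    ¬ pos t p (x - wg t p) ∧ ¬ pos t p (wg t p - x) := by
  obtain ⟨a, ha⟩ := hx
  obtain ⟨c, hc⟩ := hxd
  constructor
  · rintro ⟨b, hb⟩
    refine WPLAux.key t p ht hp (fun i => (b i : ℤ) + (c i : ℤ) + 1)
      (fun i => by beta_reduce; omega) ((t : ℤ) - 1) le_rfl ?_
    have e : ∑ i, ((b i : ℤ) + (c i : ℤ) + 1) • xg t p i
        = (∑ i, (b i : ℤ) • xg t p i) + ((∑ i, (c i : ℤ) • xg t p i) + ∑ i, xg t p i) := by
      rw [← Finset.sum_add_distrib, ← Finset.sum_add_distrib]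
      exact Finset.sum_congr rfl fun i _ => by rw [add_smul, add_smul, one_smul, add_assoc]
    rw [e, ← hb, ← hc, dg, wg, cg]
    module
  · rintro ⟨d, hd⟩
    refine WPLAux.key t p ht hp (fun i => (d i : ℤ) + (a i : ℤ) + 1)
      (fun i => by beta_reduce; omega) ((t : ℤ) - 2) (by omega) ?_
    have e : ∑ i, ((d i : ℤ) + (a i : ℤ) + 1) • xg t p i
        = (∑ i, (d i : ℤ) • xg t p i) + ((∑ i, (a i : ℤ) • xg t p i) + ∑ i, xg t p i) := by
      rw [← Finset.sum_add_distrib, ← Finset.sum_add_distrib]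
      exact Finset.sum_congr rfl fun i _ => by rw [add_smul, add_smul, one_smul, add_assoc]
    rw [e, ← hd, ← ha, wg, cg]
    module
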